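/- arXiv:1204.4565 — 2 statements merged into one kernel-verified Lean document; each statement's English description precedes it below -/
import Mathlib

section
/- Let C ⊆ V be any set of vertices such that every v ∈ C satisfies spec(v), and let V* = C ∪ { v ∈ V \ C : ∃ u ∈ C, pref v = some u ∧ pref u = some v }. Then the set of edges of M(pref) having both endpoints in V* is a maximal matching of the subgraph of G induced by V*. -/
variable {V : Type*} [Fintype V] [DecidableEq V]

/-- A configuration: every preference points to a neighbor. -/
def IsConfig (G : SimpleGraph V) (pref : V → Option V) : Prop :=
  ∀ v u : V, pref v = some u → G.Adj v u

/-- `v` proposed to a neighbor `u` which has not answered yet. -/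
def Proposition (G : SimpleGraph V) (pref : V → Option V) (v : V) : Prop :=
  ∃ u : V, G.Adj v u ∧ pref v = some u ∧ pref u = none

/-- `v` proposed to a neighbor `u` which proposed `v` back. -/
def Married (G : SimpleGraph V) (pref : V → Option V) (v : V) : Prop :=
  ∃ u : V, G.Adj v u ∧ pref v = some u ∧ pref u = some v

/-- `v` proposed to a neighbor `u` which proposed someone else. -/
def Condemned (G : SimpleGraph V) (pref : V → Option V) (v : V) : Prop :=
  ∃ u : V, G.Adj v u ∧ ∃ w : V, pref v = some u ∧ pref u = some w ∧ w ≠ v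

/-- `v` has no hope of marriage: all its neighbors are married. -/
def Dead (G : SimpleGraph V) (pref : V → Option V) (v : V) : Prop :=
  pref v = none ∧ ∀ u : V, G.Adj v u → Married G pref u

/-- `v` proposed no one and some neighbor is not married. -/
def Single (G : SimpleGraph V) (pref : V → Option V) (v : V) : Prop :=
  pref v = none ∧ ∃ u : V, G.Adj v u ∧ ¬ Married G pref u

/-- Local legitimacy predicate. -/
def Spec (G : SimpleGraph V) (pref : V → Option V) (v : V) : Prop :=
  Married G pref v ∨ Dead G pref v

/-- The matching set `M(pref)`: edges of `G` whose endpoints prefer each other. -/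
def matchSet (G : SimpleGraph V) (pref : V → Option V) : Set (Sym2 V) :=
  {e | e ∈ G.edgeSet ∧ ∃ u w : V, e = s(u, w) ∧ pref u = some w ∧ pref w = some u}

/-- `M` is a matching of `H`: a set of edges of `H` such that every vertex is
incident to at most one edge of `M`. -/
def IsMatchingOf (H : SimpleGraph V) (M : Set (Sym2 V)) : Prop :=
  M ⊆ H.edgeSet ∧ ∀ v : V, ∀ e ∈ M, ∀ f ∈ M, v ∈ e → v ∈ f → e = f

/-- `M` is a maximal matching of `H`: no matching of `H` strictly contains it. -/
def IsMaximalMatchingOf (H : SimpleGraph V) (M : Set (Sym2 V)) : Prop :=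
  IsMatchingOf H M ∧ ¬ ∃ M' : Set (Sym2 V), IsMatchingOf H M' ∧ M ⊂ M'

/-- The subgraph of `G` induced by the vertex set `S` (as a graph on `V`). -/
def inducedOn (G : SimpleGraph V) (S : Set V) : SimpleGraph V where
  Adj u v := G.Adj u v ∧ u ∈ S ∧ v ∈ S
  symm := ⟨fun u v ⟨h, hu, hv⟩ => ⟨h.symm, hv, hu⟩⟩
  loopless := ⟨fun v ⟨h, _, _⟩ => G.irrefl h⟩

/-- Guard of the marriage rule of SSMM. -/
def GuardM (G : SimpleGraph V) (pref : V → Option V) (v : V) : Prop :=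
  pref v = none ∧ ∃ u : V, G.Adj v u ∧ pref u = some v

/-- Guard of the seduction rule of SSMM. -/
def GuardS (G : SimpleGraph V) (pref : V → Option V) (v : V) : Prop :=
  pref v = none ∧ (∀ u : V, G.Adj v u → pref u ≠ some v) ∧
    ∃ u : V, G.Adj v u ∧ pref u = none

/-- Guard of the abandonment rule of SSMM. -/
def GuardA (G : SimpleGraph V) (pref : V → Option V) (v : V) : Prop :=
  ∃ u : V, G.Adj v u ∧ pref v = some u ∧ pref u ≠ some v ∧ pref u ≠ none

/-- A vertex is activable if at least one guard of SSMM holds at it. -/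
def Activable (G : SimpleGraph V) (pref : V → Option V) (v : V) : Prop :=
  GuardM G pref v ∨ GuardS G pref v ∨ GuardA G pref v


lemma aux_partner {G : SimpleGraph V} {pref : V → Option V} {e : Sym2 V} {v : V}
    (he : e ∈ matchSet G pref) (hv : v ∈ e) :
    ∃ p, pref v = some p ∧ pref p = some v ∧ e = s(v, p) := by
  obtain ⟨-, u, w, rfl, hu, hw⟩ := he
  rcases Sym2.mem_iff.mp hv with rfl | rfl
  · exact ⟨w, hu, hw, rfl⟩
  · exact ⟨u, hw, hu, Sym2.eq_swap⟩

/-- if every vertex of `C` satisfies `spec`, then the restriction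
of `M(pref)` to `V* = C ∪ {v ∉ C | ∃ u ∈ C, pref v = u ∧ pref u = v}` is a
maximal matching of the subgraph of `G` induced by `V*`. -/
theorem spec_set_maximal_matching (G : SimpleGraph V) (pref : V → Option V)
    (hconf : IsConfig G pref) (C : Set V) (hC : ∀ v ∈ C, Spec G pref v)
    (Vstar : Set V)
    (hVstar : Vstar = C ∪
      {v : V | v ∉ C ∧ ∃ u ∈ C, pref v = some u ∧ pref u = some v}) :
    IsMaximalMatchingOf (inducedOn G Vstar)
      {e ∈ matchSet G pref | ∀ w ∈ e, w ∈ Vstar} := by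
  subst hVstar
  set S := C ∪ {v : V | v ∉ C ∧ ∃ u ∈ C, pref v = some u ∧ pref u = some v} with hS
  have hpart : ∀ a u : V, a ∈ S → pref a = some u → pref u = some a → u ∈ S := by
    intro a u ha hau hua
    rcases ha with ha | ⟨hna, u', hu'C, hau', hu'a⟩
    · by_cases hu : u ∈ C
      · exact Or.inl hu
      · exact Or.inr ⟨hu, a, ha, hua, hau⟩
    · obtain rfl : u' = u := by rw [hau'] at hau; exact Option.some.inj hau
      exact Or.inl hu'C
  have hedge : ∀ a u : V, a ∈ S → pref a = some u → pref u = some a →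
      s(a, u) ∈ {e ∈ matchSet G pref | ∀ w ∈ e, w ∈ S} := by
    intro a u ha hau hua
    have huS := hpart a u ha hau hua
    refine ⟨⟨(G.mem_edgeSet).mpr (hconf a u hau), a, u, rfl, hau, hua⟩, ?_⟩
    intro w hw; rcases Sym2.mem_iff.mp hw with rfl | rfl <;> assumption
  constructor
  · constructor
    · rintro e ⟨⟨heG, u, w, rfl, hu, hw⟩, hall⟩
      exact ((inducedOn G S).mem_edgeSet).mpr
        ⟨(G.mem_edgeSet).mp heG, hall u (by simp), hall w (by simp)⟩
    · intro v e he f hf hve hvf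
      obtain ⟨p, hp1, -, rfl⟩ := aux_partner he.1 hve
      obtain ⟨q, hq1, -, rfl⟩ := aux_partner hf.1 hvf
      rw [hp1] at hq1
      rw [Option.some.inj hq1]
  · rintro ⟨M', hM', hsub⟩
    obtain ⟨e, heM', heM⟩ := Set.exists_of_ssubset hsub
    obtain ⟨⟨a, b⟩, rfl⟩ := e.exists_rep
    have heE := hM'.1 heM'
    obtain ⟨hab, haS, hbS⟩ : G.Adj a b ∧ a ∈ S ∧ b ∈ S := ((inducedOn G S).mem_edgeSet).mp heE
    have key : ∃ v u, (v = a ∨ v = b) ∧ pref v = some u ∧ pref u = some v := by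
      have step : ∀ v, v ∈ S → Married G pref v ∨ Dead G pref v := by
        intro v hv
        rcases hv with hv | ⟨-, u, huC, hvu, huv⟩
        · exact hC v hv
        · exact Or.inl ⟨u, hconf v u hvu, hvu, huv⟩
      rcases step a haS with ⟨u, -, h1, h2⟩ | ⟨-, hdead⟩
      · exact ⟨a, u, Or.inl rfl, h1, h2⟩
      · obtain ⟨u, -, h1, h2⟩ := hdead b hab
        exact ⟨b, u, Or.inr rfl, h1, h2⟩
    obtain ⟨v, u, hv, h1, h2⟩ := key
    have hvS : v ∈ S := by rcases hv with rfl | rfl <;> assumption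
    have hin := hedge v u hvS h1 h2
    have hMp := hsub.1 hin
    have hvine : v ∈ s(a, b) := by rcases hv with rfl | rfl <;> simp
    have heq := hM'.2 v s(a, b) heM' s(v, u) hMp hvine (by simp)
    exact heM (show s(a, b) ∈ _ by rw [heq]; exact hin)
end

section
/- If a configuration pref is terminal for the protocol SSMM, i.e., no vertex of G is activable (for every vertex v none of the guards G_M(v), G_S(v), G_A(v) holds), then the edge set M(pref) is a maximal matching of G. -/
variable {V : Type*} [Fintype V] [DecidableEq V]

/-- in a terminal configuration of SSMM (no vertex activable),
`M(pref)` is a maximal matching of `G`. -/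
theorem terminal_maximal_matching (G : SimpleGraph V) (pref : V → Option V)
    (hconf : IsConfig G pref)
    (hterm : ∀ v : V, ¬ GuardM G pref v ∧ ¬ GuardS G pref v ∧ ¬ GuardA G pref v) :
    IsMaximalMatchingOf G (matchSet G pref) := by
  -- key structure lemma on edges of M
  have hedge : ∀ e ∈ matchSet G pref, ∀ v : V, v ∈ e →
      ∃ w : V, pref v = some w ∧ pref w = some v ∧ e = s(v, w) := by
    rintro e ⟨he, u, w, rfl, hu, hw⟩ v hv
    rcases Sym2.mem_iff.mp hv with rfl | rfl
    · exact ⟨w, hu, hw, rfl⟩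
    · exact ⟨u, hw, hu, Sym2.eq_swap⟩
  have hmatch : IsMatchingOf G (matchSet G pref) := by
    constructor
    · intro e he; exact he.1
    · intro v e he f hf hve hvf
      obtain ⟨w1, hv1, _, he1⟩ := hedge e he v hve
      obtain ⟨w2, hv2, _, hf1⟩ := hedge f hf v hvf
      have : w1 = w2 := Option.some_inj.mp (hv1 ▸ hv2)
      rw [he1, hf1, this]
  -- every vertex with pref v = some u is married
  have hmar : ∀ v u : V, pref v = some u → pref u = some v := by
    intro v u hvu
    by_contra h
    have hadj := hconf v u hvu
    rcases hu : pref u with _ | w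
    · exact (hterm u).1 ⟨hu, v, hadj.symm, hvu⟩
    · exact (hterm v).2.2 ⟨u, hadj, hvu, h, by simp [hu]⟩
  -- every vertex with pref v = none has all neighbors married (to someone)
  have hdead : ∀ v : V, pref v = none → ∀ u : V, G.Adj v u →
      ∃ w : V, pref u = some w ∧ pref w = some u := by
    intro v hv u hadj
    rcases hu : pref u with _ | w
    · exfalso
      apply (hterm v).2.1
      refine ⟨hv, ?_, u, hadj, hu⟩
      intro x hx hxv
      exact (hterm v).1 ⟨hv, x, hx, hxv⟩
    · exact ⟨w, rfl, hmar u w hu⟩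
  refine ⟨hmatch, ?_⟩
  rintro ⟨M', hM', hsub⟩
  obtain ⟨e, heM', heM⟩ := Set.exists_of_ssubset hsub
  have heE : e ∈ G.edgeSet := hM'.1 heM'
  induction e using Sym2.inductionOn with
  | hf a b => ?_
  have hadj : G.Adj a b := heE
  -- helper: if x ∈ s(a,b) is married, contradiction
  have key : ∀ x w : V, x ∈ (s(a, b) : Sym2 V) → pref x = some w → pref w = some x → False := by
    intro x w hx hxw hwx
    have hm : s(x, w) ∈ matchSet G pref :=
      ⟨G.mem_edgeSet.mpr (hconf x w hxw), x, w, rfl, hxw, hwx⟩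
    have : s(a, b) = s(x, w) :=
      hM'.2 x _ heM' _ (hsub.1 hm) hx (Sym2.mem_mk_left x w)
    exact heM (this ▸ hm)
  rcases ha : pref a with _ | w
  · obtain ⟨w, hbw, hwb⟩ := hdead a ha b hadj
    exact key b w (Sym2.mem_mk_right a b) hbw hwb
  · exact key a w (Sym2.mem_mk_left a b) ha (hmar a w ha)
end
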